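/- Under the non-degeneracy assumption on edge weights c : E → ℝ (the energy is positive definite on closed 1-forms), for every (A, B) ∈ ℝ² there exists a unique harmonic 1-form ω with periods Σ_{γ₁} ω = A and Σ_{γ₂} ω = B. -/

import Mathlib

set_option maxHeartbeats 1000000
set_option synthInstance.maxHeartbeats 400000


open Matrix

/-- Under non-degenerate edge weights, for every period vector (A,B)
there exists a unique harmonic 1-form with those periods. -/
theorem stmt_13 (V E : Type) [Fintype V] [Fintype E] [DecidableEq V]
    (head tail : E → V)
    (d : Matrix E V ℝ)
    (hd : d = Matrix.of fun e v => (if head e = v then (1 : ℝ) else 0) - (if tail e = v then 1 else 0))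
    -- the submodule of closed 1-forms, of dimension |V| + 1
    (Closed : Submodule ℝ (E → ℝ))
    (hdim : Module.finrank ℝ Closed = Fintype.card V + 1)
    -- exact 1-forms are closed
    (hexact : ∀ f : V → ℝ, d.mulVec f ∈ Closed)
    -- connectedness: only constant functions have vanishing differential
    (hconn : ∀ f : V → ℝ, d.mulVec f = 0 ↔ ∃ r : ℝ, f = Function.const V r)
    -- the period maps along the generators γ₁, γ₂
    (p1 p2 : (E → ℝ) →ₗ[ℝ] ℝ)
    -- exact forms have vanishing periods
    (hp1 : ∀ f : V → ℝ, p1 (d.mulVec f) = 0) (hp2 : ∀ f : V → ℝ, p2 (d.mulVec f) = 0)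
    -- a closed 1-form with vanishing periods is exact
    (hper : ∀ ω ∈ Closed, p1 ω = 0 → p2 ω = 0 → ∃ f : V → ℝ, ω = d.mulVec f)
    -- edge weights, non-degenerate on closed 1-forms
    (c : E → ℝ)
    (hnonneg : ∀ ω ∈ Closed, 0 ≤ ∑ e : E, c e * ω e ^ 2)
    (hdef : ∀ ω ∈ Closed, ∑ e : E, c e * ω e ^ 2 = 0 → ω = 0) :
    ∀ A B : ℝ, ∃! ω : E → ℝ,
      ω ∈ Closed ∧ dᵀ.mulVec (fun e => c e * ω e) = 0 ∧ p1 ω = A ∧ p2 ω = B := by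
  classical
  -- V is nonempty, else E is empty and `hdim` is contradicted
  have hV : Nonempty V := by
    by_contra hV
    rw [not_nonempty_iff] at hV
    have hE : IsEmpty E := ⟨fun e => hV.false (head e)⟩
    have h0 : Module.finrank ℝ (E → ℝ) = 0 := by
      rw [Module.finrank_pi]; simp [Fintype.card_eq_zero]
    have := Closed.finrank_le
    omega
  -- the adjoint identity
  have hadj : ∀ (x : E → ℝ) (f : V → ℝ), x ⬝ᵥ d.mulVec f = dᵀ.mulVec x ⬝ᵥ f := by
    intro x f
    rw [Matrix.mulVec_transpose, Matrix.dotProduct_mulVec]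
  -- the codifferential as a linear map
  let M : (E → ℝ) →ₗ[ℝ] (E → ℝ) := LinearMap.pi (fun e => c e • LinearMap.proj e)
  let D : (E → ℝ) →ₗ[ℝ] (V → ℝ) := (Matrix.mulVecLin dᵀ).comp M
  have hD : ∀ ω : E → ℝ, D ω = dᵀ.mulVec (fun e => c e * ω e) := fun ω => rfl
  -- restricted to Closed
  let L : Closed →ₗ[ℝ] (V → ℝ) := D.comp Closed.subtype
  -- the sum functional on V → ℝ
  let φ : (V → ℝ) →ₗ[ℝ] ℝ :=
    { toFun := fun g => ∑ v, g v
      map_add' := by intro x y; simp [Finset.sum_add_distrib]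
      map_smul' := by intro r x; simp [Finset.mul_sum] }
  -- every row of d sums to zero, hence range L ≤ ker φ
  have hrow : ∀ e, ∑ v, d e v = 0 := by
    intro e
    subst hd
    simp [Finset.sum_sub_distrib, Finset.sum_ite_eq, Finset.sum_ite_eq']
  have hrange : LinearMap.range L ≤ LinearMap.ker φ := by
    rintro g ⟨ω, rfl⟩
    simp only [LinearMap.mem_ker]
    show ∑ v, (dᵀ.mulVec fun e => c e * (ω : E → ℝ) e) v = 0
    have : ∀ v, (dᵀ.mulVec fun e => c e * (ω : E → ℝ) e) v
        = ∑ e, d e v * (c e * (ω : E → ℝ) e) := by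
      intro v
      simp [Matrix.mulVec, dotProduct, Matrix.transpose_apply, mul_comm]
    rw [Finset.sum_congr rfl fun v _ => this v, Finset.sum_comm]
    refine Finset.sum_eq_zero fun e _ => ?_
    rw [← Finset.sum_mul, hrow e, zero_mul]
  -- φ is surjective since V is nonempty
  have hφ : LinearMap.range φ = ⊤ := by
    rw [LinearMap.range_eq_top]
    intro r
    refine ⟨fun _ => r / Fintype.card V, ?_⟩
    have hcard : (Fintype.card V : ℝ) ≠ 0 := by
      exact_mod_cast Fintype.card_ne_zero
    show ∑ _v : V, r / (Fintype.card V : ℝ) = r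
    rw [Finset.sum_const, Finset.card_univ, nsmul_eq_mul]
    field_simp
  -- dimension of ker φ
  have hkerφ : Module.finrank ℝ (LinearMap.ker φ) = Fintype.card V - 1 := by
    have h1 := LinearMap.finrank_range_add_finrank_ker φ
    rw [hφ, finrank_top, Module.finrank_self, Module.finrank_pi] at h1
    omega
  have hcardV : 1 ≤ Fintype.card V := Fintype.card_pos
  -- dimension of ker L ≥ 2
  have hkerL : 2 ≤ Module.finrank ℝ (LinearMap.ker L) := by
    have h1 := LinearMap.finrank_range_add_finrank_ker L
    have h2 : Module.finrank ℝ (LinearMap.range L) ≤ Fintype.card V - 1 := by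
      rw [← hkerφ]; exact Submodule.finrank_mono hrange
    rw [hdim] at h1
    omega
  -- the period map on harmonic forms
  let P : LinearMap.ker L →ₗ[ℝ] ℝ × ℝ :=
    (p1.prod p2).comp (Closed.subtype.comp (LinearMap.ker L).subtype)
  -- P is injective
  have hPkey : ∀ m : LinearMap.ker L, P m = 0 → m = 0 := by
    intro m hm
    obtain ⟨⟨ω, hωC⟩, hωL⟩ := m
    have hωL' : D ω = 0 := hωL
    have hp1ω : p1 ω = 0 := congrArg Prod.fst hm
    have hp2ω : p2 ω = 0 := congrArg Prod.snd hm
    obtain ⟨f, hf⟩ := hper ω hωC hp1ω hp2ω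
    have hE0 : ∑ e : E, c e * ω e ^ 2 = 0 := by
      have h1 : ∑ e : E, c e * ω e ^ 2 = (fun e => c e * ω e) ⬝ᵥ ω := by
        simp only [dotProduct]
        exact Finset.sum_congr rfl fun e _ => by ring
      have h2 : (dᵀ.mulVec fun e => c e * ω e) = 0 := by rw [← hD]; exact hωL'
      rw [h1]
      nth_rewrite 2 [hf]
      rw [hadj, h2, zero_dotProduct]
    have : ω = 0 := hdef ω hωC hE0
    exact Subtype.ext (Subtype.ext this)
  have hPinj : Function.Injective P :=
    fun a b h => sub_eq_zero.mp (hPkey (a - b) (by have := P.map_sub a b; rw [h, sub_self] at this; exact this))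
  -- hence finrank ker L = 2 and P is surjective
  have hfr2 : Module.finrank ℝ (ℝ × ℝ) = 2 := by
    rw [Module.finrank_prod, Module.finrank_self]
  have hkerL2 : Module.finrank ℝ (LinearMap.ker L) = 2 := by
    have := LinearMap.finrank_le_finrank_of_injective hPinj
    rw [hfr2] at this
    omega
  have hPsurj : Function.Surjective P := by
    rw [← LinearMap.range_eq_top]
    apply Submodule.eq_top_of_finrank_eq
    rw [LinearMap.finrank_range_of_inj hPinj, hkerL2, hfr2]
  -- the main statement
  intro A B
  obtain ⟨m, hm⟩ := hPsurj (A, B)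
  obtain ⟨⟨ω, hωC⟩, hωL⟩ := m
  refine ⟨ω, ⟨hωC, hωL, congrArg Prod.fst hm, congrArg Prod.snd hm⟩, ?_⟩
  rintro ω' ⟨hω'C, hω'L, hp1', hp2'⟩
  have hmem : (⟨ω', hω'C⟩ : Closed) ∈ LinearMap.ker L := hω'L
  have := hPinj (a₁ := ⟨⟨ω', hω'C⟩, hmem⟩) (a₂ := ⟨⟨ω, hωC⟩, hωL⟩) (by
    rw [hm]
    exact Prod.ext hp1' hp2')
  exact congrArg (fun m : LinearMap.ker L => ((m : Closed) : E → ℝ)) this
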